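/- arXiv:0811.0071 — 4 statements merged into one kernel-verified Lean document; each statement's English description precedes it below -/
import Mathlib

section
/- A nonempty subset C ⊆ S is closed under ⇢* (F(C) = C), and minimal among nonempty sets in the sense that every nonempty proper subset C' ⊊ C satisfies F(C') ⊄ C', if and only if C is a CP equilibrium, i.e., C is a strongly connected component under ⇢ (any two elements of C are related by ⇢*, in both directions) with no ⇢-edge leaving C. -/
def F {S : Type*} (r : S → S → Prop) (C : Set S) : Set S :=
  {s' | ∃ s ∈ C, Relation.ReflTransGen r s s'}

def IsCPEquilibrium {S : Type*} (r : S → S → Prop) (C : Set S) : Prop :=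
  C.Nonempty ∧
  (∀ s₁ ∈ C, ∀ s₂ ∈ C, Relation.ReflTransGen r s₁ s₂) ∧
  (∀ s ∈ C, ∀ s', r s s' → s' ∈ C)

theorem least_fixed_point_iff_cp_equilibrium
    {S : Type*} (r : S → S → Prop) (C : Set S) :
    (F r C = C ∧ C.Nonempty ∧
      ∀ C' : Set S, C'.Nonempty → C' ⊂ C → ¬ F r C' ⊆ C') ↔
    IsCPEquilibrium r C := by
  constructor
  · rintro ⟨hfix, hne, hmin⟩
    refine ⟨hne, ?_, ?_⟩
    · intro s₁ hs₁ s₂ hs₂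
      -- consider C' = states reachable from s₁
      set C' : Set S := F r {s₁} with hC'
      have hsub : C' ⊆ C := by
        rintro x ⟨s, hs, hxs⟩
        rw [Set.mem_singleton_iff] at hs
        rw [← hfix]
        exact ⟨s₁, hs₁, hs ▸ hxs⟩
      have hne' : C'.Nonempty := ⟨s₁, s₁, rfl, Relation.ReflTransGen.refl⟩
      have hFsub : F r C' ⊆ C' := by
        rintro x ⟨s, ⟨t, ht, hts⟩, hsx⟩
        exact ⟨t, ht, hts.trans hsx⟩
      have : ¬ C' ⊂ C := fun h => hmin C' hne' h hFsub
      have heq : C' = C := by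
        rcases (Set.ssubset_iff_of_subset hsub).not.mp this with h
        push_neg at h
        exact Set.Subset.antisymm hsub (fun x hx => h x hx)
      have : s₂ ∈ C' := heq ▸ hs₂
      rcases this with ⟨t, ht, hts⟩
      rw [Set.mem_singleton_iff] at ht
      subst ht
      exact hts
    · intro s hs s' hss'
      rw [← hfix]
      exact ⟨s, hs, Relation.ReflTransGen.single hss'⟩
  · rintro ⟨hne, hconn, hclosed⟩
    refine ⟨?_, hne, ?_⟩
    · apply Set.Subset.antisymm
      · rintro x ⟨s, hs, hsx⟩
        induction hsx with
        | refl => exact hs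
        | tail _ h ih => exact hclosed _ ih _ h
      · exact fun x hx => ⟨x, hx, Relation.ReflTransGen.refl⟩
    · intro C' hne' hss hF
      obtain ⟨s', hs'⟩ := hne'
      obtain ⟨s, hsC, hsC'⟩ := Set.exists_of_ssubset hss
      have : s ∈ F r C' := ⟨s', hs', hconn s' (hss.1 hs') s hsC⟩
      exact hsC' (hF this)
end

section
/- If C is a nonempty least fixed point of the update function F (i.e., F(C) = C, C ≠ ∅, and no nonempty proper subset C' ⊊ C satisfies F(C') ⊆ C'), then for any two elements s₁, s₂ ∈ C we have s₁ ⇢* s₂. -/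
theorem least_fixed_point_mutually_reachable
    {S : Type*} (r : S → S → Prop) (C : Set S)
    (hfix : {s' | ∃ s ∈ C, Relation.ReflTransGen r s s'} = C)
    (hne : C.Nonempty)
    (hleast : ∀ C' : Set S, C'.Nonempty → C' ⊂ C →
      ¬ {s' | ∃ s ∈ C', Relation.ReflTransGen r s s'} ⊆ C') :
    ∀ s₁ ∈ C, ∀ s₂ ∈ C, Relation.ReflTransGen r s₁ s₂ := by
  intro s₁ hs₁ s₂ hs₂
  set C' : Set S := {s' | s' ∈ C ∧ Relation.ReflTransGen r s₁ s'} with hC'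
  have hsub : C' ⊆ C := fun x hx => hx.1
  have hne' : C'.Nonempty := ⟨s₁, hs₁, Relation.ReflTransGen.refl⟩
  have hclosed : {s' | ∃ s ∈ C', Relation.ReflTransGen r s s'} ⊆ C' := by
    rintro x ⟨s, ⟨hsC, hreach⟩, hsx⟩
    refine ⟨?_, hreach.trans hsx⟩
    rw [← hfix]
    exact ⟨s, hsC, hsx⟩
  by_cases h : C' = C
  · rw [← h] at hs₂; exact hs₂.2
  · exact absurd hclosed (hleast C' hne' ⟨hsub, fun hCC => h (le_antisymm hsub hCC)⟩)
end

section
/- If some situation s of a CP game can reach only finitely many situations via the reflexive-transitive closure of the change-of-mind relation, then the game has a CP equilibrium. -/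
theorem cp_equilibrium_of_finitely_reachable
    {S : Type*} (r : S → S → Prop)
    (h : ∃ s : S, {s' | Relation.ReflTransGen r s s'}.Finite) :
    ∃ C : Set S, IsCPEquilibrium r C := by
  obtain ⟨s, hs⟩ := h
  set reach : S → Set S := fun t => {s' | Relation.ReflTransGen r t s'} with hreach
  have hsub : ∀ t, Relation.ReflTransGen r s t → reach t ⊆ reach s := by
    intro t hst u hu
    exact hst.trans hu
  have hfin : ∀ t, Relation.ReflTransGen r s t → (reach t).Finite := by
    intro t hst
    exact hs.subset (hsub t hst)
  -- set of possible cardinalities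
  have hne : ∃ n, ∃ t, Relation.ReflTransGen r s t ∧ (reach t).ncard = n :=
    ⟨(reach s).ncard, s, Relation.ReflTransGen.refl, rfl⟩
  classical
  obtain ⟨n, ⟨t, hst, hcard⟩, hmin⟩ := Nat.lt_wfRel.wf.has_min _ hne
  refine ⟨reach t, ⟨t, Relation.ReflTransGen.refl⟩, ?_, ?_⟩
  · intro u hu v hv
    -- show t ∈ reach u
    have hsu : Relation.ReflTransGen r s u := hst.trans hu
    have hsubut : reach u ⊆ reach t := fun w hw => hu.trans hw
    have htu : Relation.ReflTransGen r u t := by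
      by_contra hcon
      have hss : reach u ⊂ reach t := ⟨hsubut, fun habs => hcon (habs Relation.ReflTransGen.refl)⟩
      have hlt : (reach u).ncard < (reach t).ncard :=
        Set.ncard_lt_ncard hss (hfin t hst)
      exact hmin (reach u).ncard ⟨u, hsu, rfl⟩ (hcard ▸ hlt)
    exact htu.trans hv
  · intro u hu u' hr
    exact hu.trans (Relation.ReflTransGen.single hr)
end

section
/- In the Chinese Wall CP game, every situation reachable from the empty situation (where no subject has accessed any object) via any change-of-mind relation derived from any family of preference relations satisfies the no-insider-trading property: for every subject p and every pair of objects o₁, o₂ accessed by p, either their companies belong to different interest classes or they belong to the same company. -/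
/-- Chinese Wall conversion relation for subject `p`. -/
def CWConv {P O Comp I : Type*} (classify : Comp → I) (owner : O → Comp)
    (p : P) (s s' : P → Set O) : Prop :=
  (∀ p', p' ≠ p → s' p' = s p') ∧
  ∃ o : O, s' p = s p ∪ {o} ∧
    ∀ o' ∈ s p, classify (owner o) ≠ classify (owner o') ∨ owner o = owner o'

/-- No insider trading. -/
def NIT {P O Comp I : Type*} (classify : Comp → I) (owner : O → Comp)
    (s : P → Set O) : Prop :=
  ∀ p : P, ∀ o₁ ∈ s p, ∀ o₂ ∈ s p,
    classify (owner o₁) ≠ classify (owner o₂) ∨ owner o₁ = owner o₂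

theorem chinese_wall_no_insider_trading
    {P O Comp I : Type*} (classify : Comp → I) (owner : O → Comp)
    (pref : P → (P → Set O) → (P → Set O) → Prop)
    (s : P → Set O)
    (h : Relation.ReflTransGen
          (fun s s' => ∃ p, CWConv classify owner p s s' ∧ pref p s s')
          (fun _ => (∅ : Set O)) s) :
    NIT classify owner s := by
  induction h with
  | refl => intro p o₁ h₁; exact absurd h₁ (Set.notMem_empty _)
  | tail _ hstep ih =>
    rename_i b c _
    obtain ⟨q, ⟨hother, o, hset, hok⟩, -⟩ := hstep
    intro p o₁ h₁ o₂ h₂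
    by_cases hpq : p = q
    · subst hpq
      rw [hset] at h₁ h₂
      rcases h₁ with h₁ | h₁ <;> rcases h₂ with h₂ | h₂
      · exact ih p o₁ h₁ o₂ h₂
      · rcases Set.mem_singleton_iff.mp h₂ with rfl
        rcases hok o₁ h₁ with h | h
        · exact Or.inl (Ne.symm h)
        · exact Or.inr h.symm
      · rcases Set.mem_singleton_iff.mp h₁ with rfl
        exact hok o₂ h₂
      · rcases Set.mem_singleton_iff.mp h₁ with rfl
        rcases Set.mem_singleton_iff.mp h₂ with rfl
        exact Or.inr rfl
    · rw [hother p hpq] at h₁ h₂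
      exact ih p o₁ h₁ o₂ h₂
end
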